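/- Dyadic containers for the local-subproblem family: for every d ≥ 1 and 1 ≤ r ≤ d there is an assignment of a dyadic interval D(J) ⊆ [0, 2^d − 1] to each J ∈ I_{d,r} such that |J| ≤ |D(J)| ≤ 2|J| and the containers {D(J)} are pairwise disjoint. -/
import Mathlib


/-- The local-subproblem family `I_{d,r}` of closed integer intervals (as pairs of
endpoints): `I_{d,1} = {[2^{d−1}−1, 2^d−1]}` and
`I_{d,r} = I_{d−1,r−1} ⊔ (2^{d−1} + I_{d−1,r−1})` for `r ≥ 2`. -/
def Ifam : ℕ → ℕ → Finset (ℕ × ℕ)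
  | _, 0 => ∅
  | d, 1 => {(2 ^ (d - 1) - 1, 2 ^ d - 1)}
  | d, (r + 2) =>
      Ifam (d - 1) (r + 1) ∪
        (Ifam (d - 1) (r + 1)).image (fun p => (p.1 + 2 ^ (d - 1), p.2 + 2 ^ (d - 1)))
  termination_by d r => r

lemma Ifam_bounds : ∀ r d, r ≤ d → ∀ J ∈ Ifam d r, J.1 ≤ J.2 ∧ J.2 ≤ 2 ^ d - 1 := by
  intro r
  induction r using Nat.strong_induction_on with
  | _ r IH =>
    match r with
    | 0 => intro d _ J hJ; simp [Ifam] at hJ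
    | 1 =>
      intro d _ J hJ
      simp only [Ifam, Finset.mem_singleton] at hJ
      subst hJ
      have h1 : (1:ℕ) ≤ 2 ^ (d-1) := Nat.one_le_two_pow
      have h2 : 2 ^ (d-1) ≤ 2 ^ d := Nat.pow_le_pow_right (by norm_num) (by omega)
      simp only
      omega
    | r + 2 =>
      intro d hrd J hJ
      have hd1 : r + 1 ≤ d - 1 := by omega
      have h1 : (1:ℕ) ≤ 2 ^ (d-1) := Nat.one_le_two_pow
      have h2 : 2 ^ (d-1) * 2 = 2 ^ d := by rw [← pow_succ]; congr 1; omega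
      simp only [Ifam, Finset.mem_union, Finset.mem_image] at hJ
      rcases hJ with hJ | ⟨p, hp, hpe⟩
      · have := IH (r+1) (by omega) (d-1) hd1 J hJ
        omega
      · have := IH (r+1) (by omega) (d-1) hd1 p hp
        subst hpe
        simp only
        omega

lemma Ifam_containers : ∀ r d, 1 ≤ r → r ≤ d →
    ∃ D : ℕ × ℕ → ℕ × ℕ,
      (∀ J ∈ Ifam d r,
        (∃ a q, D J = (a * 2 ^ q, (a + 1) * 2 ^ q - 1)) ∧
        (D J).2 ≤ 2 ^ d - 1 ∧
        (D J).1 ≤ J.1 ∧ J.2 ≤ (D J).2 ∧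
        J.2 - J.1 + 1 ≤ (D J).2 - (D J).1 + 1 ∧
        (D J).2 - (D J).1 + 1 ≤ 2 * (J.2 - J.1 + 1)) ∧
      ∀ J ∈ Ifam d r, ∀ J' ∈ Ifam d r, J ≠ J' →
        Disjoint (Finset.Icc (D J).1 (D J).2) (Finset.Icc (D J').1 (D J').2) := by
  intro r
  induction r using Nat.strong_induction_on with
  | _ r IH =>
    match r with
    | 0 => intro d h; omega
    | 1 =>
      intro d _ hd
      refine ⟨fun _ => (0, 2 ^ d - 1), ?_, ?_⟩
      · intro J hJ
        simp only [Ifam, Finset.mem_singleton] at hJ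
        subst hJ
        have h1 : (1:ℕ) ≤ 2 ^ (d-1) := Nat.one_le_two_pow
        have h2 : 2 ^ (d-1) * 2 = 2 ^ d := by rw [← pow_succ]; congr 1; omega
        refine ⟨⟨0, d, by norm_num⟩, ?_, ?_, ?_, ?_, ?_⟩ <;> simp only <;> omega
      · intro J hJ J' hJ' hne
        simp only [Ifam, Finset.mem_singleton] at hJ hJ'
        exact absurd (hJ.trans hJ'.symm) hne
    | r + 2 =>
      intro d _ hrd
      obtain ⟨D', hD'1, hD'2⟩ := IH (r+1) (by omega) (d-1) (by omega) (by omega)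
      set t := 2 ^ (d-1) with ht
      have h1 : (1:ℕ) ≤ t := Nat.one_le_two_pow
      have h2 : t * 2 = 2 ^ d := by rw [ht, ← pow_succ]; congr 1; omega
      set D : ℕ × ℕ → ℕ × ℕ := fun J =>
        if J.1 < t then D' J
        else ((D' (J.1 - t, J.2 - t)).1 + t, (D' (J.1 - t, J.2 - t)).2 + t) with hD
      have hmem : ∀ J ∈ Ifam d (r+2),
          J ∈ Ifam (d-1) (r+1) ∨ ∃ p ∈ Ifam (d-1) (r+1), J = (p.1 + t, p.2 + t) := by
        intro J hJ
        simp only [Ifam, Finset.mem_union, Finset.mem_image] at hJ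
        rcases hJ with hJ | ⟨p, hp, hpe⟩
        · exact Or.inl hJ
        · exact Or.inr ⟨p, hp, hpe.symm⟩
      have hleft : ∀ J ∈ Ifam (d-1) (r+1), D J = D' J := by
        intro J hJ
        have hb := Ifam_bounds (r+1) (d-1) (by omega) J hJ
        simp only [hD]
        rw [if_pos (by omega)]
      have hright : ∀ p ∈ Ifam (d-1) (r+1),
          D (p.1 + t, p.2 + t) = ((D' p).1 + t, (D' p).2 + t) := by
        intro p hp
        simp only [hD]
        rw [if_neg (show ¬(p.1 + t < t) by omega)]
        simp only [Nat.add_sub_cancel]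
      refine ⟨D, ?_, ?_⟩
      · intro J hJ
        rcases hmem J hJ with hJ' | ⟨p, hp, rfl⟩
        · obtain ⟨hdy, hb, h3, h4, h5, h6⟩ := hD'1 J hJ'
          rw [hleft J hJ']
          exact ⟨hdy, by omega, h3, h4, h5, h6⟩
        · obtain ⟨⟨a, q, hq⟩, hb, h3, h4, h5, h6⟩ := hD'1 p hp
          rw [hright p hp]
          have e1 : (D' p).1 = a * 2 ^ q := by rw [hq]
          have e2 : (D' p).2 = (a + 1) * 2 ^ q - 1 := by rw [hq]
          have hm1 : (1:ℕ) ≤ 2 ^ q := Nat.one_le_two_pow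
          have hB : (a + 1) * 2 ^ q = a * 2 ^ q + 2 ^ q := by ring
          have hqle : q ≤ d - 1 := by
            by_contra hcon
            have : 2 ^ (d-1) < 2 ^ q := Nat.pow_lt_pow_right (by norm_num) (by omega)
            omega
          have hpow : 2 ^ (d-1-q) * 2 ^ q = t := by
            rw [ht, ← pow_add]; congr 1; omega
          refine ⟨⟨a + 2 ^ (d-1-q), q, ?_⟩, ?_, ?_, ?_, ?_, ?_⟩
          · have e3 : (a + 2 ^ (d-1-q)) * 2 ^ q = a * 2 ^ q + 2 ^ (d-1-q) * 2 ^ q := by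
              ring
            have e4 : (a + 2 ^ (d-1-q) + 1) * 2 ^ q
                = (a + 1) * 2 ^ q + 2 ^ (d-1-q) * 2 ^ q := by ring
            refine Prod.ext ?_ ?_ <;> simp only <;> omega
          all_goals simp only <;> omega
      · intro J hJ J' hJ' hne
        have hsep : ∀ K ∈ Ifam (d-1) (r+1), ∀ p ∈ Ifam (d-1) (r+1),
            Disjoint (Finset.Icc (D K).1 (D K).2)
              (Finset.Icc (D (p.1 + t, p.2 + t)).1 (D (p.1 + t, p.2 + t)).2) := by
          intro K hK p hp
          rw [hleft K hK, hright p hp]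
          rw [Finset.disjoint_left]
          intro x hx1 hx2
          rw [Finset.mem_Icc] at hx1 hx2
          have hbK := (hD'1 K hK).2.1
          omega
        rcases hmem J hJ with hJm | ⟨p, hp, rfl⟩ <;>
          rcases hmem J' hJ' with hJm' | ⟨p', hp', rfl⟩
        · rw [hleft J hJm, hleft J' hJm']
          exact hD'2 J hJm J' hJm' hne
        · exact hsep J hJm p' hp'
        · exact (hsep J' hJm' p hp).symm
        · have hpp : p ≠ p' := by
            intro h; apply hne; rw [h]
          have hdisj := hD'2 p hp p' hp' hpp
          rw [hright p hp, hright p' hp']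
          rw [Finset.disjoint_left]
          intro x hx1 hx2
          rw [Finset.mem_Icc] at hx1 hx2
          have m1 : x - t ∈ Finset.Icc (D' p).1 (D' p).2 :=
            Finset.mem_Icc.mpr ⟨by omega, by omega⟩
          have m2 : x - t ∈ Finset.Icc (D' p').1 (D' p').2 :=
            Finset.mem_Icc.mpr ⟨by omega, by omega⟩
          exact Finset.disjoint_left.mp hdisj m1 m2

theorem Ifam_dyadic_containers (d r : ℕ) (hd : 1 ≤ d) (hr : 1 ≤ r) (hrd : r ≤ d) :
    ∃ D : ℕ × ℕ → ℕ × ℕ,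
      (∀ J ∈ Ifam d r,
        (∃ a q, D J = (a * 2 ^ q, (a + 1) * 2 ^ q - 1)) ∧
        (D J).2 ≤ 2 ^ d - 1 ∧
        (D J).1 ≤ J.1 ∧ J.2 ≤ (D J).2 ∧
        J.2 - J.1 + 1 ≤ (D J).2 - (D J).1 + 1 ∧
        (D J).2 - (D J).1 + 1 ≤ 2 * (J.2 - J.1 + 1)) ∧
      ∀ J ∈ Ifam d r, ∀ J' ∈ Ifam d r, J ≠ J' →
        Disjoint (Finset.Icc (D J).1 (D J).2) (Finset.Icc (D J').1 (D J').2) :=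
  Ifam_containers r d hr hrd
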